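/- Let X be a Tychonoff space whose free topological vector space V(X) is a locally convex topological vector space. Then X contains no infinite compact subsets, i.e., every compact subset of X is finite. -/

import Mathlib

open Topology Set

universe u v w

/-- `IsFreeTVS V i` says that the (real) topological vector space `V` together with the
continuous map `i : X → V` is the free topological vector space over `X`: every continuous
map from `X` to a topological vector space `E` extends uniquely to a continuous linear
operator `V →L[ℝ] E`. -/
def IsFreeTVS {X : Type u} [TopologicalSpace X] (V : Type v) [AddCommGroup V] [Module ℝ V]
    [TopologicalSpace V] [IsTopologicalAddGroup V] [ContinuousSMul ℝ V] (i : X → V) : Prop :=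
  Continuous i ∧
    ∀ (E : Type w) [AddCommGroup E] [Module ℝ E] [TopologicalSpace E]
      [IsTopologicalAddGroup E] [ContinuousSMul ℝ E] (f : X → E),
      Continuous f → ∃! g : V →L[ℝ] E, ∀ x, g (i x) = f x

/-- `SPn i n` is the set `SP_n(X) = {λ₁x₁ + ⋯ + λₙxₙ : λᵢ ∈ [−n,n], xᵢ ∈ X}` inside `V`. -/
def SPn {X : Type u} {V : Type v} [AddCommGroup V] [Module ℝ V]
    (i : X → V) (n : ℕ) : Set V :=
  {v | ∃ (c : Fin n → ℝ) (x : Fin n → X),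
    (∀ j, c j ∈ Set.Icc (-(n : ℝ)) (n : ℝ)) ∧ v = ∑ j, c j • i (x j)}


namespace FreeTVSAux

noncomputable section

open Finsupp Filter Real

/-- The weight sequence. -/
def wgt (k : ℕ) : ℝ := (Real.sqrt (Real.sqrt ((k : ℝ) + 1)))⁻¹

lemma sqrt_sqrt_pos {x : ℝ} (hx : 0 < x) : 0 < Real.sqrt (Real.sqrt x) :=
  Real.sqrt_pos.2 (Real.sqrt_pos.2 hx)

lemma wgt_pos (k : ℕ) : 0 < wgt k := by
  have : (0:ℝ) < (k:ℝ) + 1 := by positivity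
  exact inv_pos.2 (sqrt_sqrt_pos this)

lemma one_le_sqrt_sqrt {x : ℝ} (hx : 1 ≤ x) : 1 ≤ Real.sqrt (Real.sqrt x) := by
  have h1 : 1 ≤ Real.sqrt x := by
    rw [show (1:ℝ) = Real.sqrt 1 by rw [Real.sqrt_one]]
    exact Real.sqrt_le_sqrt hx
  rw [show (1:ℝ) = Real.sqrt 1 by rw [Real.sqrt_one]]
  exact Real.sqrt_le_sqrt h1

lemma wgt_le_one (k : ℕ) : wgt k ≤ 1 := by
  have h : 1 ≤ Real.sqrt (Real.sqrt ((k:ℝ) + 1)) := one_le_sqrt_sqrt (by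
    have : (0:ℝ) ≤ (k:ℝ) := Nat.cast_nonneg k
    linarith)
  unfold wgt
  rw [inv_le_one_iff₀]
  right; exact h

lemma wgt_anti : Antitone wgt := by
  intro j k hjk
  unfold wgt
  have h1 : (0:ℝ) < (j:ℝ) + 1 := by positivity
  apply inv_anti₀ (sqrt_sqrt_pos h1)
  apply Real.sqrt_le_sqrt
  apply Real.sqrt_le_sqrt
  have : (j:ℝ) ≤ (k:ℝ) := Nat.cast_le.2 hjk
  linarith

lemma wgt_ge_of_lt {j n : ℕ} (h : j < n) : (Real.sqrt (Real.sqrt (n:ℝ)))⁻¹ ≤ wgt j := by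
  unfold wgt
  have h1 : (0:ℝ) < (j:ℝ) + 1 := by positivity
  apply inv_anti₀ (sqrt_sqrt_pos h1)
  apply Real.sqrt_le_sqrt
  apply Real.sqrt_le_sqrt
  have : (j:ℝ) + 1 ≤ (n:ℝ) := by exact_mod_cast Nat.succ_le_of_lt h
  linarith

/-- The F-seminorm on finitely supported sequences. -/
def q (c : ℕ →₀ ℝ) : ℝ := ∑ k ∈ c.support, wgt k * Real.sqrt |c k|

lemma q_eq_sum {c : ℕ →₀ ℝ} {s : Finset ℕ} (h : c.support ⊆ s) :
    q c = ∑ k ∈ s, wgt k * Real.sqrt |c k| := by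
  refine Finset.sum_subset h fun k _ hk => ?_
  have : c k = 0 := Finsupp.notMem_support_iff.1 hk
  simp [this]

lemma q_nonneg (c : ℕ →₀ ℝ) : 0 ≤ q c := by
  apply Finset.sum_nonneg
  intro k _
  exact mul_nonneg (wgt_pos k).le (Real.sqrt_nonneg _)

lemma q_zero : q 0 = 0 := by simp [q]

lemma sqrt_add_le {a b : ℝ} (ha : 0 ≤ a) (hb : 0 ≤ b) :
    Real.sqrt (a + b) ≤ Real.sqrt a + Real.sqrt b := by
  have h1 : Real.sqrt a ^ 2 = a := Real.sq_sqrt ha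
  have h2 : Real.sqrt b ^ 2 = b := Real.sq_sqrt hb
  have h3 : (0:ℝ) ≤ Real.sqrt a := Real.sqrt_nonneg a
  have h4 : (0:ℝ) ≤ Real.sqrt b := Real.sqrt_nonneg b
  rw [show Real.sqrt a + Real.sqrt b = Real.sqrt ((Real.sqrt a + Real.sqrt b)^2) from
    (Real.sqrt_sq (by positivity)).symm]
  apply Real.sqrt_le_sqrt
  nlinarith

lemma sqrt_abs_add_le (a b : ℝ) :
    Real.sqrt |a + b| ≤ Real.sqrt |a| + Real.sqrt |b| :=
  le_trans (Real.sqrt_le_sqrt (abs_add_le a b)) (sqrt_add_le (abs_nonneg a) (abs_nonneg b))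

lemma q_add_le (c d : ℕ →₀ ℝ) : q (c + d) ≤ q c + q d := by
  classical
  set s : Finset ℕ := c.support ∪ d.support with hs
  have hcd : (c + d).support ⊆ s := Finsupp.support_add
  have hc : c.support ⊆ s := Finset.subset_union_left
  have hd : d.support ⊆ s := Finset.subset_union_right
  rw [q_eq_sum hcd, q_eq_sum hc, q_eq_sum hd, ← Finset.sum_add_distrib]
  apply Finset.sum_le_sum
  intro k _
  have h := sqrt_abs_add_le (c k) (d k)
  have hk : (c + d) k = c k + d k := Finsupp.add_apply c d k
  rw [hk, ← mul_add]
  exact mul_le_mul_of_nonneg_left h (wgt_pos k).le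

lemma q_smul (t : ℝ) (c : ℕ →₀ ℝ) : q (t • c) = Real.sqrt |t| * q c := by
  have hsupp : (t • c).support ⊆ c.support := Finsupp.support_smul
  rw [q_eq_sum hsupp, q, Finset.mul_sum]
  apply Finset.sum_congr rfl
  intro k _
  have : (t • c) k = t * c k := rfl
  rw [this, abs_mul, Real.sqrt_mul (abs_nonneg t)]
  ring

lemma q_neg (c : ℕ →₀ ℝ) : q (-c) = q c := by
  have : -c = (-1 : ℝ) • c := by simp
  rw [this, q_smul]
  simp

lemma q_single (k : ℕ) (t : ℝ) : q (Finsupp.single k t) = wgt k * Real.sqrt |t| := by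
  rw [q_eq_sum (Finsupp.support_single_subset (a := k) (b := t))]
  simp

instance : PseudoMetricSpace (ℕ →₀ ℝ) where
  dist c d := q (c - d)
  dist_self c := by simp [q_zero]
  dist_comm c d := by
    show q (c - d) = q (d - c)
    rw [show d - c = -(c - d) by abel, q_neg]
  dist_triangle c d e := by
    show q (c - e) ≤ q (c - d) + q (d - e)
    rw [show c - e = (c - d) + (d - e) by abel]
    exact q_add_le _ _

lemma dist_eq_q (c d : ℕ →₀ ℝ) : dist c d = q (c - d) := rfl

lemma dist_zero_eq_q (c : ℕ →₀ ℝ) : dist c 0 = q c := by rw [dist_eq_q, sub_zero]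

instance : IsTopologicalAddGroup (ℕ →₀ ℝ) where
  continuous_add := by
    rw [continuous_iff_continuousAt]
    rintro ⟨a, b⟩
    rw [ContinuousAt, tendsto_iff_dist_tendsto_zero]
    have hle : ∀ p : (ℕ →₀ ℝ) × (ℕ →₀ ℝ),
        dist (p.1 + p.2) (a + b) ≤ dist p.1 a + dist p.2 b := by
      intro p
      show q _ ≤ q _ + q _
      rw [show p.1 + p.2 - (a + b) = (p.1 - a) + (p.2 - b) by abel]
      exact q_add_le _ _
    refine squeeze_zero (fun p => dist_nonneg) hle ?_
    have : Continuous fun p : (ℕ →₀ ℝ) × (ℕ →₀ ℝ) => dist p.1 a + dist p.2 b :=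
      (continuous_fst.dist continuous_const).add (continuous_snd.dist continuous_const)
    have h0 := this.tendsto (a, b)
    rw [show dist a a + dist b b = (0:ℝ) by rw [dist_self, dist_self, add_zero]] at h0
    exact h0
  continuous_neg := by
    rw [continuous_iff_continuousAt]
    intro a
    rw [ContinuousAt, tendsto_iff_dist_tendsto_zero]
    have : ∀ c : ℕ →₀ ℝ, dist (-c) (-a) = dist c a := by
      intro c
      show q _ = q _
      rw [show -c - -a = -(c - a) by abel, q_neg]
    simp only [this]
    exact tendsto_iff_dist_tendsto_zero.1 tendsto_id

instance : ContinuousSMul ℝ (ℕ →₀ ℝ) := by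
  constructor
  rw [continuous_iff_continuousAt]
  rintro ⟨t₀, c₀⟩
  rw [ContinuousAt, tendsto_iff_dist_tendsto_zero]
  have hle : ∀ p : ℝ × (ℕ →₀ ℝ), dist (p.1 • p.2) (t₀ • c₀) ≤
      Real.sqrt |p.1| * dist p.2 c₀ + Real.sqrt |p.1 - t₀| * q c₀ := by
    intro p
    have h1 : p.1 • p.2 - t₀ • c₀ = p.1 • (p.2 - c₀) + (p.1 - t₀) • c₀ := by
      rw [smul_sub, sub_smul]; abel
    rw [dist_eq_q, h1]
    calc q (p.1 • (p.2 - c₀) + (p.1 - t₀) • c₀)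
        ≤ q (p.1 • (p.2 - c₀)) + q ((p.1 - t₀) • c₀) := q_add_le _ _
      _ = Real.sqrt |p.1| * dist p.2 c₀ + Real.sqrt |p.1 - t₀| * q c₀ := by
          rw [q_smul, q_smul, dist_eq_q]
  refine squeeze_zero (fun p => dist_nonneg) hle ?_
  have hcont : Continuous fun p : ℝ × (ℕ →₀ ℝ) =>
      Real.sqrt |p.1| * dist p.2 c₀ + Real.sqrt |p.1 - t₀| * q c₀ := by
    apply Continuous.add
    · exact (Real.continuous_sqrt.comp (continuous_abs.comp continuous_fst)).mul
        (continuous_snd.dist continuous_const)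
    · exact (Real.continuous_sqrt.comp (continuous_abs.comp
        (continuous_fst.sub continuous_const))).mul continuous_const
  have h0 := hcont.tendsto (t₀, c₀)
  rw [show Real.sqrt |t₀| * dist c₀ c₀ + Real.sqrt |t₀ - t₀| * q c₀ = (0:ℝ) by
    rw [dist_self, sub_self, abs_zero, Real.sqrt_zero, mul_zero, zero_mul, add_zero]] at h0
  exact h0

end

end FreeTVSAux

namespace FreeTVSAux

noncomputable section

open Finsupp Filter

variable {X : Type u} [TopologicalSpace X] [T35Space X]

lemma step_lemma (S W : Set X) (hS : S.Infinite) (hW : IsOpen W) (hSW : S ⊆ W) :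
    ∃ x U, x ∈ S ∧ IsOpen U ∧ x ∈ U ∧ U ⊆ W ∧ (S \ closure U).Infinite := by
  obtain ⟨a, ha, b, hb, hab⟩ := hS.nontrivial
  obtain ⟨A₀, B₀, hA₀, hB₀, haA₀, hbB₀, hAB₀⟩ := t2_separation hab
  obtain ⟨A₁, hA₁n, hA₁c, hA₁s⟩ := exists_mem_nhds_isClosed_subset (hA₀.mem_nhds haA₀)
  obtain ⟨B₁, hB₁n, hB₁c, hB₁s⟩ := exists_mem_nhds_isClosed_subset (hB₀.mem_nhds hbB₀)
  set A : Set X := interior A₁ ∩ W with hA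
  set B : Set X := interior B₁ ∩ W with hB
  have hAo : IsOpen A := isOpen_interior.inter hW
  have hBo : IsOpen B := isOpen_interior.inter hW
  have haA : a ∈ A := ⟨mem_interior_iff_mem_nhds.2 hA₁n, hSW ha⟩
  have hbB : b ∈ B := ⟨mem_interior_iff_mem_nhds.2 hB₁n, hSW hb⟩
  have hclA : closure A ⊆ A₀ := by
    calc closure A ⊆ closure (interior A₁) := closure_mono inter_subset_left
      _ ⊆ closure A₁ := closure_mono interior_subset
      _ = A₁ := hA₁c.closure_eq
      _ ⊆ A₀ := hA₁s
  have hclB : closure B ⊆ B₀ := by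
    calc closure B ⊆ closure (interior B₁) := closure_mono inter_subset_left
      _ ⊆ closure B₁ := closure_mono interior_subset
      _ = B₁ := hB₁c.closure_eq
      _ ⊆ B₀ := hB₁s
  by_cases h : (S \ closure A).Infinite
  · exact ⟨a, A, ha, hAo, haA, inter_subset_right, h⟩
  · have h1 : (S ∩ closure A).Infinite := by
      have h2 := hS.diff (Set.not_infinite.1 h)
      rwa [Set.diff_diff_right_self] at h2
    have h2 : (S \ closure B).Infinite := by
      refine h1.mono fun z hz => ⟨hz.1, fun hzB => ?_⟩
      exact hAB₀.ne_of_mem (hclA hz.2) (hclB hzB) rfl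
    exact ⟨b, B, hb, hBo, hbB, inter_subset_right, h2⟩

/-- The state space for the recursion: an infinite set inside an open set. -/
def StT (X : Type u) [TopologicalSpace X] : Type u :=
  {p : Set X × Set X // p.1.Infinite ∧ IsOpen p.2 ∧ p.1 ⊆ p.2}

def pick (s : StT X) : X × Set X :=
  have h := step_lemma s.1.1 s.1.2 s.2.1 s.2.2.1 s.2.2.2
  (h.choose, h.choose_spec.choose)

lemma pick_spec (s : StT X) :
    (pick s).1 ∈ s.1.1 ∧ IsOpen (pick s).2 ∧ (pick s).1 ∈ (pick s).2 ∧
      (pick s).2 ⊆ s.1.2 ∧ (s.1.1 \ closure (pick s).2).Infinite :=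
  (step_lemma s.1.1 s.1.2 s.2.1 s.2.2.1 s.2.2.2).choose_spec.choose_spec

def nextSt (s : StT X) : StT X :=
  ⟨(s.1.1 \ closure (pick s).2, s.1.2 \ closure (pick s).2), by
    obtain ⟨h1, h2, h3, h4, h5⟩ := pick_spec s
    exact ⟨h5, s.2.2.1.sdiff isClosed_closure, fun z hz => ⟨s.2.2.2 hz.1, hz.2⟩⟩⟩

lemma exists_disjoint_family {K : Set X} (hK : K.Infinite) :
    ∃ (x : ℕ → X) (U : ℕ → Set X),
      (∀ n, x n ∈ K) ∧ (∀ n, IsOpen (U n)) ∧ (∀ n, x n ∈ U n) ∧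
      ∀ m n, m ≠ n → Disjoint (U m) (U n) := by
  let st : ℕ → StT X := fun n =>
    Nat.rec (⟨(K, Set.univ), hK, isOpen_univ, Set.subset_univ K⟩ : StT X)
      (fun _ s => nextSt s) n
  have hst : ∀ n, st (n + 1) = nextSt (st n) := fun n => rfl
  set x : ℕ → X := fun n => (pick (st n)).1 with hx
  set U : ℕ → Set X := fun n => (pick (st n)).2 with hU
  have hSdef : ∀ n, (st (n+1)).1.1 = (st n).1.1 \ closure (U n) := fun n => rfl
  have hWdef : ∀ n, (st (n+1)).1.2 = (st n).1.2 \ closure (U n) := fun n => rfl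
  -- S n ⊆ K
  have hSK : ∀ n, (st n).1.1 ⊆ K := by
    intro n
    induction n with
    | zero => exact fun z hz => hz
    | succ m ih => rw [hSdef]; exact fun z hz => ih hz.1
  -- W antitone
  have hWmono : ∀ m n, m ≤ n → (st n).1.2 ⊆ (st m).1.2 := by
    intro m n hmn
    induction n with
    | zero => cases Nat.le_zero.1 hmn; exact fun z hz => hz
    | succ k ih =>
      rcases Nat.lt_or_ge m (k+1) with h | h
      · intro z hz
        exact ih (Nat.lt_succ_iff.1 h) ((hWdef k ▸ hz).1)
      · have : m = k + 1 := le_antisymm hmn h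
        subst this; exact fun z hz => hz
  have hUW : ∀ n, U n ⊆ (st n).1.2 := fun n => (pick_spec (st n)).2.2.2.1
  have hxS : ∀ n, x n ∈ (st n).1.1 := fun n => (pick_spec (st n)).1
  have hUo : ∀ n, IsOpen (U n) := fun n => (pick_spec (st n)).2.1
  have hxU : ∀ n, x n ∈ U n := fun n => (pick_spec (st n)).2.2.1
  -- disjointness for m < n
  have key : ∀ m n, m < n → Disjoint (U m) (U n) := by
    intro m n hmn
    rw [Set.disjoint_right]
    intro z hzUn
    have h1 : z ∈ (st n).1.2 := hUW n hzUn
    have h2 : z ∈ (st (m+1)).1.2 := hWmono (m+1) n hmn h1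
    rw [hWdef m] at h2
    exact fun hzUm => h2.2 (subset_closure hzUm)
  refine ⟨x, U, fun n => hSK n (hxS n), hUo, hxU, fun m n hmn => ?_⟩
  rcases lt_or_gt_of_ne hmn with h | h
  · exact key m n h
  · exact (key n m h).symm

lemma exists_phi {K : Set X} (hK : K.Infinite) :
    ∃ (x : ℕ → X) (U : ℕ → Set X) (φ : ℕ → X → ℝ),
      (∀ n, x n ∈ K) ∧ (∀ n, IsOpen (U n)) ∧ (∀ n, x n ∈ U n) ∧
      (∀ m n, m ≠ n → Disjoint (U m) (U n)) ∧
      (∀ n, Continuous (φ n)) ∧ (∀ n, φ n (x n) = 1) ∧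
      (∀ n z, 0 ≤ φ n z) ∧ (∀ n z, φ n z ≤ 1) ∧ ∀ n z, z ∉ U n → φ n z = 0 := by
  obtain ⟨x, U, hxK, hUo, hxU, hdisj⟩ := exists_disjoint_family hK
  have h : ∀ n : ℕ, ∃ φ : X → ℝ, Continuous φ ∧ φ (x n) = 1 ∧
      (∀ z, 0 ≤ φ z) ∧ (∀ z, φ z ≤ 1) ∧ ∀ z, z ∉ U n → φ z = 0 := by
    intro n
    obtain ⟨fI, hfc, hf0, hf1⟩ := CompletelyRegularSpace.completely_regular (x n) (U n)ᶜ
      (isClosed_compl_iff.2 (hUo n)) (by simpa using hxU n)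
    refine ⟨fun z => 1 - (fI z : ℝ), by continuity, ?_, ?_, ?_, ?_⟩
    · show 1 - ((fI (x n) : ℝ)) = 1
      rw [hf0]; norm_num
    · intro z; have := (fI z).2.2; simpa using this
    · intro z; have := (fI z).2.1; simpa using this
    · intro z hz
      show 1 - ((fI z : ℝ)) = 0
      rw [hf1 hz]; norm_num
  choose φ hφc hφ1 hφnn hφle hφ0 using h
  exact ⟨x, U, φ, hxK, hUo, hxU, hdisj, hφc, hφ1, hφnn, hφle, hφ0⟩

end

end FreeTVSAux

namespace FreeTVSAux

noncomputable section

open Finsupp Filter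

open scoped Classical

variable {X : Type u} [TopologicalSpace X]

/-- The combined test map into finitely supported sequences. -/
def fdef (φ : ℕ → X → ℝ) (z : X) : ℕ →₀ ℝ :=
  if h : ∃ n, φ n z ≠ 0 then Finsupp.single h.choose (φ h.choose z) else 0

section fdef

variable {φ : ℕ → X → ℝ} {U : ℕ → Set X}
  (hdisj : ∀ m n, m ≠ n → Disjoint (U m) (U n))
  (hφ0 : ∀ n z, z ∉ U n → φ n z = 0)

include hφ0 in
lemma mem_of_phi_ne {j : ℕ} {z : X} (hj : φ j z ≠ 0) : z ∈ U j := by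
  by_contra h
  exact hj (hφ0 j z h)

include hdisj hφ0 in
lemma fdef_eq_single {k : ℕ} {z : X} (hz : z ∈ U k) :
    fdef φ z = Finsupp.single k (φ k z) := by
  by_cases h : ∃ n, φ n z ≠ 0
  · have hj : φ h.choose z ≠ 0 := h.choose_spec
    have hjU : z ∈ U h.choose := mem_of_phi_ne hφ0 hj
    have : h.choose = k := by
      by_contra hne
      exact (hdisj _ _ hne).ne_of_mem hjU hz rfl
    simp only [fdef]
    rw [dif_pos h, this]
  · push_neg at h
    simp only [fdef]
    rw [dif_neg (by push_neg; exact h), h k, Finsupp.single_zero]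

lemma fdef_eq_zero {z : X} (h : ∀ n, φ n z = 0) : fdef φ z = 0 := by
  simp only [fdef]
  rw [dif_neg (by push_neg; exact h)]

lemma exists_wgt_lt {ε : ℝ} (hε : 0 < ε) : ∃ N : ℕ, wgt N < ε := by
  obtain ⟨M, hM⟩ := exists_nat_gt (((1/ε)^2)^2)
  refine ⟨M, ?_⟩
  have h0 : (0:ℝ) < 1/ε := by positivity
  have h1 : ((1/ε)^2)^2 < (M:ℝ) + 1 := by
    have : (M:ℝ) ≤ (M:ℝ) + 1 := by linarith
    linarith
  have h2 : 1/ε < Real.sqrt (Real.sqrt ((M:ℝ) + 1)) := by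
    have ha : (1/ε)^2 < Real.sqrt ((M:ℝ) + 1) := by
      have := Real.sqrt_lt_sqrt (by positivity) h1
      rwa [Real.sqrt_sq (by positivity)] at this
    have hb := Real.sqrt_lt_sqrt (by positivity) ha
    rwa [Real.sqrt_sq (by positivity)] at hb
  have h3 : 0 < Real.sqrt (Real.sqrt ((M:ℝ) + 1)) := lt_trans h0 h2
  rw [wgt, inv_lt_iff_one_lt_mul₀ h3]
  calc (1:ℝ) = (1/ε) * ε := by field_simp
    _ < Real.sqrt (Real.sqrt ((M:ℝ) + 1)) * ε := by
        exact mul_lt_mul_of_pos_right h2 hε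
    _ = ε * Real.sqrt (Real.sqrt ((M:ℝ) + 1)) := mul_comm _ _

include hdisj hφ0 in
lemma fdef_continuous (hUo : ∀ n, IsOpen (U n)) (hφc : ∀ n, Continuous (φ n))
    (hφnn : ∀ n z, 0 ≤ φ n z) (hφle : ∀ n z, φ n z ≤ 1) :
    Continuous (fdef φ) := by
  rw [continuous_iff_continuousAt]
  intro y
  by_cases hy : ∃ k, φ k y ≠ 0
  · obtain ⟨k, hk⟩ := hy
    have hyU : y ∈ U k := mem_of_phi_ne hφ0 hk
    have hev : ∀ᶠ z in 𝓝 y, fdef φ z = Finsupp.single k (φ k z) := by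
      filter_upwards [(hUo k).mem_nhds hyU] with z hz
      exact fdef_eq_single hdisj hφ0 hz
    have hc : ContinuousAt (fun z => Finsupp.single k (φ k z)) y := by
      have h1 : Continuous fun z => (φ k z) • (Finsupp.single k (1:ℝ)) :=
        (hφc k).smul continuous_const
      have h2 : (fun z => Finsupp.single k (φ k z)) =
          fun z => (φ k z) • (Finsupp.single k (1:ℝ)) := by
        funext z
        rw [Finsupp.smul_single, smul_eq_mul, mul_one]
      rw [h2]
      exact h1.continuousAt
    exact hc.congr (hev.mono fun z hz => hz.symm)
  · push_neg at hy
    rw [ContinuousAt, fdef_eq_zero hy, Metric.tendsto_nhds]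
    intro ε hε
    obtain ⟨N, hN⟩ := exists_wgt_lt hε
    have hev : ∀ᶠ z in 𝓝 y, ∀ j ∈ Finset.range N, wgt j * Real.sqrt (φ j z) < ε := by
      rw [Filter.eventually_all_finset]
      intro j _
      have hc : Continuous fun z => wgt j * Real.sqrt (φ j z) :=
        continuous_const.mul (Real.continuous_sqrt.comp (hφc j))
      have h0 : wgt j * Real.sqrt (φ j y) < ε := by
        rw [hy j, Real.sqrt_zero, mul_zero]; exact hε
      exact (hc.tendsto y).eventually_lt_const h0
    filter_upwards [hev] with z hz
    by_cases hz2 : ∃ j, φ j z ≠ 0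
    · obtain ⟨j, hj⟩ := hz2
      have hzU : z ∈ U j := mem_of_phi_ne hφ0 hj
      rw [fdef_eq_single hdisj hφ0 hzU, dist_zero_eq_q, q_single,
        abs_of_nonneg (hφnn j z)]
      rcases lt_or_ge j N with h | h
      · exact hz j (Finset.mem_range.2 h)
      · calc wgt j * Real.sqrt (φ j z) ≤ wgt j * 1 := by
              apply mul_le_mul_of_nonneg_left _ (wgt_pos j).le
              rw [show (1:ℝ) = Real.sqrt 1 by rw [Real.sqrt_one]]
              exact Real.sqrt_le_sqrt (hφle j z)
          _ = wgt j := mul_one _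
          _ ≤ wgt N := wgt_anti h
          _ < ε := hN
    · push_neg at hz2
      rw [fdef_eq_zero hz2, dist_self]
      exact hε

end fdef

/-- The element `n⁻¹ • ∑_{k<n} e_k` and the lower bound on its norm. -/
def useq (n : ℕ) : ℕ →₀ ℝ :=
  (n : ℝ)⁻¹ • ∑ k ∈ Finset.range n, Finsupp.single k (1:ℝ)

lemma q_useq_ge {n : ℕ} (hn : 0 < n) : Real.sqrt (Real.sqrt n) ≤ q (useq n) := by
  set c : ℕ →₀ ℝ := ∑ k ∈ Finset.range n, Finsupp.single k (1:ℝ) with hc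
  have hsupp : c.support ⊆ Finset.range n := by
    refine Finset.Subset.trans Finsupp.support_finset_sum ?_
    intro j hj
    rw [Finset.mem_biUnion] at hj
    obtain ⟨k, hk, hjk⟩ := hj
    have := Finsupp.support_single_subset hjk
    rw [Finset.mem_singleton] at this
    rwa [this]
  have happ : ∀ j ∈ Finset.range n, c j = 1 := by
    intro j hj
    rw [hc, Finsupp.finset_sum_apply]
    have : ∀ k ∈ Finset.range n, (Finsupp.single k (1:ℝ)) j
        = if k = j then (1:ℝ) else 0 := by
      intro k _
      classical
      rw [Finsupp.single_apply]
    rw [Finset.sum_congr rfl this, Finset.sum_ite_eq' (Finset.range n) j (fun _ => (1:ℝ))]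
    simp [hj]
  have hqc : q c = ∑ j ∈ Finset.range n, wgt j := by
    rw [q_eq_sum hsupp]
    refine Finset.sum_congr rfl fun j hj => ?_
    rw [happ j hj]
    norm_num
  have hqcge : (n : ℝ) * (Real.sqrt (Real.sqrt n))⁻¹ ≤ q c := by
    rw [hqc]
    calc (n : ℝ) * (Real.sqrt (Real.sqrt n))⁻¹
        = ∑ _j ∈ Finset.range n, (Real.sqrt (Real.sqrt n))⁻¹ := by
          rw [Finset.sum_const, Finset.card_range, nsmul_eq_mul]
      _ ≤ ∑ j ∈ Finset.range n, wgt j := by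
          refine Finset.sum_le_sum fun j hj => ?_
          exact wgt_ge_of_lt (Finset.mem_range.1 hj)
  have hn' : (0:ℝ) < n := by exact_mod_cast hn
  have hs : (0:ℝ) < Real.sqrt n := Real.sqrt_pos.2 hn'
  have hss : (0:ℝ) < Real.sqrt (Real.sqrt n) := Real.sqrt_pos.2 hs
  have hq : q (useq n) = (Real.sqrt n)⁻¹ * q c := by
    rw [useq, ← hc, q_smul, abs_of_nonneg (by positivity : (0:ℝ) ≤ (n:ℝ)⁻¹),
      Real.sqrt_inv]
  rw [hq]
  set t := Real.sqrt (n:ℝ) with htdef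
  set s := Real.sqrt t with hsdef
  have h1 : t * t = (n:ℝ) := Real.mul_self_sqrt hn'.le
  have h2 : s * s = t := Real.mul_self_sqrt hs.le
  have e1 : (n:ℝ) = (t * s) * s := by rw [mul_assoc, h2, h1]
  have hkey : t⁻¹ * ((n:ℝ) * s⁻¹) = s := by
    rw [e1]
    field_simp
  calc s = t⁻¹ * ((n:ℝ) * s⁻¹) := hkey.symm
    _ ≤ t⁻¹ * q c := mul_le_mul_of_nonneg_left hqcge (inv_nonneg.2 hs.le)

lemma exists_sqrt_sqrt_gt (C : ℝ) : ∃ n : ℕ, 0 < n ∧ C < Real.sqrt (Real.sqrt n) := by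
  rcases le_or_gt C 0 with h | h
  · refine ⟨1, one_pos, ?_⟩
    have : Real.sqrt (Real.sqrt 1) = 1 := by rw [Real.sqrt_one, Real.sqrt_one]
    push_cast
    rw [this]
    linarith
  · obtain ⟨m, hm⟩ := exists_nat_gt (((C+1)^2)^2)
    refine ⟨m, ?_, ?_⟩
    · by_contra hm0
      push_neg at hm0
      interval_cases m
      simp at hm
      nlinarith
    · have h1 : ((C+1)^2)^2 < (m:ℝ) := hm
      have ha : (C+1)^2 < Real.sqrt m := by
        have := Real.sqrt_lt_sqrt (by positivity) h1
        rwa [Real.sqrt_sq (by positivity)] at this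
      have hb : C + 1 < Real.sqrt (Real.sqrt m) := by
        have := Real.sqrt_lt_sqrt (by positivity) ha
        rwa [Real.sqrt_sq (by positivity)] at this
      linarith

end

end FreeTVSAux

open Pointwise

noncomputable section

universe w'

instance : IsTopologicalAddGroup (ULift.{w'} (ℕ →₀ ℝ)) where

instance : ContinuousSMul ℝ (ULift.{w'} (ℕ →₀ ℝ)) := by
  refine ⟨?_⟩
  have h : Continuous fun p : ℝ × ULift.{w'} (ℕ →₀ ℝ) => p.1 • (p.2.down) :=
    continuous_smul.comp (continuous_fst.prodMk (continuous_uliftDown.comp continuous_snd))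
  exact continuous_uliftUp.comp h

end

/-- If `X` is a Tychonoff space whose free topological vector space
`(V, i)` is locally convex, then every compact subset of `X` is finite. -/
theorem finite_compact_of_locallyConvex_freeTVS
    {X : Type u} [TopologicalSpace X] [T35Space X]
    (V : Type v) [AddCommGroup V] [Module ℝ V] [TopologicalSpace V]
    [IsTopologicalAddGroup V] [ContinuousSMul ℝ V] (i : X → V)
    (hV : IsFreeTVS V i) (hlc : LocallyConvexSpace ℝ V) :
    ∀ K : Set X, IsCompact K → K.Finite := by
  intro K hKc
  rw [← Set.not_infinite]
  intro hK
  haveI := hlc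
  obtain ⟨x, U, φ, hxK, hUo, hxU, hdisj, hφc, hφ1, hφnn, hφle, hφ0⟩ := FreeTVSAux.exists_phi hK
  have hfc : Continuous (FreeTVSAux.fdef φ) :=
    FreeTVSAux.fdef_continuous hdisj hφ0 hUo hφc hφnn hφle
  have hfx : ∀ n, FreeTVSAux.fdef φ (x n) = Finsupp.single n (1:ℝ) := by
    intro n
    rw [FreeTVSAux.fdef_eq_single hdisj hφ0 (hxU n), hφ1 n]
  obtain ⟨hi, hext⟩ := hV
  obtain ⟨g, hg, -⟩ := hext (ULift (ℕ →₀ ℝ))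
    (fun z => ULift.up (FreeTVSAux.fdef φ z)) (continuous_uliftUp.comp hfc)
  let D : ULift (ℕ →₀ ℝ) →L[ℝ] (ℕ →₀ ℝ) :=
    { toLinearMap := (ULift.moduleEquiv : ULift (ℕ →₀ ℝ) ≃ₗ[ℝ] (ℕ →₀ ℝ)).toLinearMap
      cont := continuous_uliftDown }
  let G : V →L[ℝ] (ℕ →₀ ℝ) := D.comp g
  have hG : ∀ z, G (i z) = FreeTVSAux.fdef φ z := by
    intro z
    show D (g (i z)) = _
    rw [hg z]
    rfl
  letI : UniformSpace V := IsTopologicalAddGroup.rightUniformSpace V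
  haveI : IsUniformAddGroup V := isUniformAddGroup_of_addCommGroup
  have hbdd : Bornology.IsVonNBounded ℝ (i '' K) :=
    ((hKc.image hi).totallyBounded).isVonNBounded ℝ
  have hch : Bornology.IsVonNBounded ℝ (convexHull ℝ (i '' K)) := by
    intro W hW
    obtain ⟨W', hW'p, hW'sub⟩ := (nhds_hasBasis_absConvex ℝ V).mem_iff.1 hW
    have habs := hbdd hW'p.1
    show ∀ᶠ a in Bornology.cobounded ℝ, convexHull ℝ (i '' K) ⊆ a • W
    refine habs.eventually.mono fun a ha => ?_
    refine (convexHull_min ha (hW'p.2.2.smul a)).trans (Set.smul_set_mono hW'sub)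
  have hbdd2 : Bornology.IsVonNBounded ℝ (G '' (convexHull ℝ (i '' K))) := hch.image G
  have habs : Absorbs ℝ (Metric.ball (0 : ℕ →₀ ℝ) 1) (G '' (convexHull ℝ (i '' K))) :=
    hbdd2 (Metric.ball_mem_nhds 0 one_pos)
  obtain ⟨r, hr, hrs⟩ := habs.exists_pos
  obtain ⟨n, hn0, hnr⟩ := FreeTVSAux.exists_sqrt_sqrt_gt (Real.sqrt r)
  have hn' : (n:ℝ) ≠ 0 := Nat.cast_ne_zero.2 hn0.ne'
  have hv : ((n:ℝ)⁻¹ • ∑ k ∈ Finset.range n, i (x k)) ∈ convexHull ℝ (i '' K) := by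
    rw [Finset.smul_sum]
    refine (convex_convexHull ℝ (i '' K)).sum_mem (fun k _ => by positivity) ?_ ?_
    · rw [Finset.sum_const, Finset.card_range, nsmul_eq_mul]
      field_simp
    · exact fun k _ => subset_convexHull ℝ (i '' K) ⟨x k, hxK k, rfl⟩
  have hGv : G ((n:ℝ)⁻¹ • ∑ k ∈ Finset.range n, i (x k)) = FreeTVSAux.useq n := by
    rw [map_smul, map_sum, FreeTVSAux.useq]
    congr 1
    refine Finset.sum_congr rfl fun k _ => ?_
    rw [hG (x k), hfx k]
  have hmem : FreeTVSAux.useq n ∈ r • Metric.ball (0 : ℕ →₀ ℝ) 1 := by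
    refine hrs r (by rw [Real.norm_eq_abs, abs_of_pos hr]) ?_
    exact ⟨_, hv, hGv⟩
  obtain ⟨y, hy, hyu⟩ := Set.mem_smul_set.1 hmem
  have hqy : FreeTVSAux.q y < 1 := by
    rw [Metric.mem_ball, FreeTVSAux.dist_zero_eq_q] at hy
    exact hy
  have hqu : FreeTVSAux.q (FreeTVSAux.useq n) ≤ Real.sqrt r := by
    rw [← hyu, FreeTVSAux.q_smul]
    calc Real.sqrt |r| * FreeTVSAux.q y ≤ Real.sqrt |r| * 1 :=
          mul_le_mul_of_nonneg_left hqy.le (Real.sqrt_nonneg _)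
      _ = Real.sqrt r := by rw [mul_one, abs_of_pos hr]
  have hge := FreeTVSAux.q_useq_ge hn0
  linarith
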